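/- The pair of functions u₁(t,x,y) = -ln|y|, u₂(t,x,y) = t, defined for 0 < |y| < 1, is a solution of the system u₁ₜ + x u₂ₓ + y u₁ u₂ᵧ = 0 and u₂ₜ + x u₂ u₁ₓ + y u₁ᵧ = 0. -/

import Mathlib

/-- `u₁ = -ln|y|`, `u₂ = t` (for `0 < |y| < 1`) is an explicit
double-wave solution of the hydrodynamic system
`u₁ₜ + x u₂ₓ + y u₁ u₂ᵧ = 0`, `u₂ₜ + x u₂ u₁ₓ + y u₁ᵧ = 0`. -/
theorem stmt_13
    (u1 u2 : ℝ → ℝ → ℝ → ℝ)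
    (hu1 : ∀ t x y, u1 t x y = -Real.log |y|)
    (hu2 : ∀ t x y, u2 t x y = t) :
    ∀ t x y : ℝ, 0 < |y| → |y| < 1 →
      (deriv (fun s => u1 s x y) t + x * deriv (fun s => u2 t s y) x
        + y * u1 t x y * deriv (fun s => u2 t x s) y = 0) ∧
      (deriv (fun s => u2 s x y) t + x * u2 t x y * deriv (fun s => u1 t s y) x
        + y * deriv (fun s => u1 t x s) y = 0) := by
  intro t x y hy0 _
  have hy : y ≠ 0 := by simpa using abs_pos.mp hy0
  have h1t : (fun s => u1 s x y) = fun _ => -Real.log |y| := funext fun s => hu1 s x y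
  have h1x : (fun s => u1 t s y) = fun _ => -Real.log |y| := funext fun s => hu1 t s y
  have h1y : (fun s => u1 t x s) = fun s => -Real.log s := by
    funext s; rw [hu1, Real.log_abs]
  have h2t : (fun s => u2 s x y) = fun s => s := funext fun s => hu2 s x y
  have h2x : (fun s => u2 t s y) = fun _ => t := funext fun s => hu2 t s y
  have h2y : (fun s => u2 t x s) = fun _ => t := funext fun s => hu2 t x s
  have dlog : deriv (fun s => -Real.log s) y = -y⁻¹ := by
    rw [deriv.fun_neg, Real.deriv_log]
  rw [h1t, h1x, h1y, h2t, h2x, h2y, dlog, hu1, hu2]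
  simp [deriv_const, deriv_id', mul_inv_cancel₀ hy]
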